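/- If H is a verbally closed subgroup of G and V is a verbal subgroup functor, then the image of H in G/V(G) under the natural projection is isomorphic to H/V(H) and is verbally closed in G/V(G). -/

import Mathlib

/-- `H` is verbally closed in `G`: every equation `w(x₁,x₂,…) = h` with `h ∈ H`,
`w` a word in the free group, that has a solution in `G` has a solution in `H`. -/
def VerballyClosed {G : Type*} [Group G] (H : Subgroup G) : Prop :=
  ∀ (w : FreeGroup ℕ) (h : G), h ∈ H → (∃ g : ℕ → G, FreeGroup.lift g w = h) →
    ∃ k : ℕ → G, (∀ n, k n ∈ H) ∧ FreeGroup.lift k w = h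

/-- The verbal subgroup of `G` corresponding to a set of words `W`: the subgroup
generated by all values of the words of `W` in `G`. -/
def verbalSubgroup (W : Set (FreeGroup ℕ)) (G : Type*) [Group G] : Subgroup G :=
  Subgroup.closure {x : G | ∃ w ∈ W, ∃ g : ℕ → G, FreeGroup.lift g w = x}

/-- Verbal subgroups are normal. -/
instance verbal_normal (W : Set (FreeGroup ℕ)) (G : Type*) [Group G] :
    (verbalSubgroup W G).Normal := by
  constructor
  intro x hx c
  refine Subgroup.closure_induction
    (fun y hy => ?_) (by simpa using Subgroup.one_mem _) (fun y z _ _ hy hz => ?_) (fun y _ hy => ?_) hx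
  · obtain ⟨w, hw, g, rfl⟩ := hy
    refine Subgroup.subset_closure ⟨w, hw, fun n => c * g n * c⁻¹, ?_⟩
    have := FreeGroup.lift_unique (f := fun n => c * g n * c⁻¹)
      (((MulAut.conj c).toMonoidHom).comp (FreeGroup.lift g))
      (by intro n; simp [MulAut.conj]) (x := w)
    simpa [MulAut.conj] using this.symm
  · have : c * (y * z) * c⁻¹ = (c * y * c⁻¹) * (c * z * c⁻¹) := by group
    rw [this]; exact Subgroup.mul_mem _ hy hz
  · have : c * y⁻¹ * c⁻¹ = (c * y * c⁻¹)⁻¹ := by group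
    rw [this]; exact Subgroup.inv_mem _ hy

universe u

/-- A homomorphism composed with a lift is the lift of the composition. -/
private lemma hom_lift {K L : Type*} [Group K] [Group L] (m : K →* L) (g : ℕ → K) :
    m.comp (FreeGroup.lift g) = FreeGroup.lift (fun n => m (g n)) :=
  FreeGroup.ext_hom _ _ (fun a => by simp)

private lemma lift_map' {K : Type*} [Group K] (e : ℕ → ℕ) (f : ℕ → K) (x : FreeGroup ℕ) :
    FreeGroup.lift f (FreeGroup.map e x) = FreeGroup.lift (fun n => f (e n)) x := by
  have h : (FreeGroup.lift f).comp (FreeGroup.map e) = FreeGroup.lift (fun n => f (e n)) :=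
    FreeGroup.ext_hom _ _ (fun a => by simp)
  exact DFunLike.congr_fun h x

/-- Every element of a verbal subgroup is the value of a single word whose value in any
group lies in the verbal subgroup of that group. -/
private lemma mem_verbal_word {G : Type u} [Group G] (W : Set (FreeGroup ℕ)) {v : G}
    (hv : v ∈ verbalSubgroup W G) :
    ∃ u : FreeGroup ℕ, ∃ g : ℕ → G, FreeGroup.lift g u = v ∧
      ∀ (K : Type u) [Group K] (f : ℕ → K), FreeGroup.lift f u ∈ verbalSubgroup W K := by
  refine Subgroup.closure_induction (fun y hy => ?_) ?_ (fun y z _ _ hy hz => ?_)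
    (fun y _ hy => ?_) hv
  · obtain ⟨w, hw, g, rfl⟩ := hy
    exact ⟨w, g, rfl, fun K _ f => Subgroup.subset_closure ⟨w, hw, f, rfl⟩⟩
  · exact ⟨1, fun _ => 1, by simp, fun K _ f => by simpa using Subgroup.one_mem _⟩
  · obtain ⟨u₁, g₁, h₁, hu₁⟩ := hy
    obtain ⟨u₂, g₂, h₂, hu₂⟩ := hz
    refine ⟨FreeGroup.map (fun n => 2*n) u₁ * FreeGroup.map (fun n => 2*n+1) u₂,
      fun n => if n % 2 = 0 then g₁ (n / 2) else g₂ (n / 2), ?_, ?_⟩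
    · rw [map_mul, lift_map', lift_map']
      have e₁ : (fun n => if (2*n) % 2 = 0 then g₁ ((2*n) / 2) else g₂ ((2*n) / 2)) = g₁ := by
        funext n
        have h1 : (2*n) % 2 = 0 := by omega
        have h2 : (2*n) / 2 = n := by omega
        simp [h1, h2]
      have e₂ : (fun n => if (2*n+1) % 2 = 0 then g₁ ((2*n+1) / 2) else g₂ ((2*n+1) / 2)) = g₂ := by
        funext n
        have h1 : (2*n+1) % 2 = 1 := by omega
        have h2 : (2*n+1) / 2 = n := by omega
        simp [h1, h2]
      rw [e₁, e₂, h₁, h₂]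
    · intro K _ f
      rw [map_mul]
      exact Subgroup.mul_mem _ (by rw [lift_map']; exact hu₁ K _)
        (by rw [lift_map']; exact hu₂ K _)
  · obtain ⟨u, g, h, hu⟩ := hy
    exact ⟨u⁻¹, g, by simp [h], fun K _ f => by
      rw [map_inv]; exact Subgroup.inv_mem _ (hu K f)⟩

/-- For a verbally closed subgroup, `H ∩ V(G) = V(H)`. -/
private lemma comap_verbal {G : Type u} [Group G] (H : Subgroup G) (hvc : VerballyClosed H)
    (W : Set (FreeGroup ℕ)) :
    (verbalSubgroup W G).comap H.subtype = verbalSubgroup W ↥H := by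
  apply le_antisymm
  · intro x hx
    rw [Subgroup.mem_comap] at hx
    obtain ⟨u, g, hval, hK⟩ := mem_verbal_word W hx
    obtain ⟨k, hkH, hk⟩ := hvc u (x : G) x.2 ⟨g, hval⟩
    have key := hK ↥H (fun n => ⟨k n, hkH n⟩)
    have hcoe : ((FreeGroup.lift (fun n => (⟨k n, hkH n⟩ : ↥H))) u : G) = FreeGroup.lift k u :=
      DFunLike.congr_fun (hom_lift H.subtype (fun n => ⟨k n, hkH n⟩)) u
    have hx2 : FreeGroup.lift (fun n => (⟨k n, hkH n⟩ : ↥H)) u = x :=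
      Subtype.ext (by rw [hcoe, hk])
    rwa [hx2] at key
  · rw [verbalSubgroup, Subgroup.closure_le]
    rintro x ⟨w, hw, f, rfl⟩
    simp only [SetLike.mem_coe, Subgroup.mem_comap]
    refine Subgroup.subset_closure ⟨w, hw, fun n => (f n : G), ?_⟩
    exact (DFunLike.congr_fun (hom_lift H.subtype f) w).symm

/-- If `H` is verbally closed in `G`, then the image of `H` in `G/V(G)` is
isomorphic to `H/V(H)` and is verbally closed in `G/V(G)`. -/
theorem image_in_quotient_verballyClosed {G : Type*} [Group G] (H : Subgroup G)
    (hvc : VerballyClosed H) (W : Set (FreeGroup ℕ)) :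
    Nonempty ((H.map (QuotientGroup.mk' (verbalSubgroup W G)) : Subgroup (G ⧸ verbalSubgroup W G))
        ≃* (↥H ⧸ verbalSubgroup W ↥H)) ∧
      VerballyClosed (H.map (QuotientGroup.mk' (verbalSubgroup W G))) := by
  set V := verbalSubgroup W G with hV
  set π := QuotientGroup.mk' V with hπ
  set φ : ↥H →* G ⧸ V := π.comp H.subtype with hφ
  have hker : φ.ker = verbalSubgroup W ↥H := by
    rw [hφ, ← comap_verbal H hvc W]
    ext x
    simp only [MonoidHom.mem_ker, MonoidHom.comp_apply, Subgroup.coe_subtype,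
      Subgroup.mem_subgroupOf, Subgroup.mem_comap, QuotientGroup.mk'_apply,
      QuotientGroup.eq_one_iff]
    rw [hπ, QuotientGroup.mk'_apply]
    exact QuotientGroup.eq_one_iff _
  have hrange : φ.range = H.map π := by
    rw [hφ, MonoidHom.range_comp, Subgroup.range_subtype]
  constructor
  · exact ⟨((MulEquiv.subgroupCongr hrange).symm.trans
      (QuotientGroup.quotientKerEquivRange φ).symm).trans
      (QuotientGroup.quotientMulEquivOfEq hker)⟩
  · intro w hbar hmem ⟨gbar, hgbar⟩
    obtain ⟨h, hH, hh⟩ := hmem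
    -- lift gbar pointwise to G
    have hsurj : Function.Surjective π := QuotientGroup.mk'_surjective V
    choose g hg using fun n => hsurj (gbar n)
    have hproj : FreeGroup.lift gbar w = π (FreeGroup.lift g w) := by
      have h1 := DFunLike.congr_fun (hom_lift π g) w
      simp only [MonoidHom.comp_apply] at h1
      have hgb : gbar = fun n => π (g n) := funext fun n => (hg n).symm
      rw [h1, ← hgb]
    have hvmem : h⁻¹ * FreeGroup.lift g w ∈ V := by
      have h2 : π h = π (FreeGroup.lift g w) := by rw [hh, ← hgbar]; exact hproj
      rwa [hπ, QuotientGroup.mk'_apply, QuotientGroup.mk'_apply, QuotientGroup.eq] at h2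
    obtain ⟨u, g', hval, hK⟩ := mem_verbal_word W hvmem
    -- combined word
    set w' : FreeGroup ℕ := FreeGroup.map (fun n => 2*n) w *
      (FreeGroup.map (fun n => 2*n+1) u)⁻¹ with hw'
    set gg : ℕ → G := fun n => if n % 2 = 0 then g (n / 2) else g' (n / 2) with hgg
    have e₁ : (fun n => gg (2*n)) = g := by
      funext n
      have h1 : (2*n) % 2 = 0 := by omega
      have h2 : (2*n) / 2 = n := by omega
      simp [hgg, h1, h2]
    have e₂ : (fun n => gg (2*n+1)) = g' := by
      funext n
      have h1 : (2*n+1) % 2 = 1 := by omega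
      have h2 : (2*n+1) / 2 = n := by omega
      simp [hgg, h1, h2]
    have hsolG : FreeGroup.lift gg w' = h := by
      rw [hw', map_mul, map_inv, lift_map', lift_map', e₁, e₂, hval]
      group
    obtain ⟨k, hkH, hk⟩ := hvc w' h hH ⟨gg, hsolG⟩
    refine ⟨fun n => π (k (2*n)), fun n => ⟨k (2*n), hkH _, rfl⟩, ?_⟩
    have step : π (FreeGroup.lift k w') = FreeGroup.lift (fun n => π (k n)) w' :=
      DFunLike.congr_fun (hom_lift π k) w'
    have huval : FreeGroup.lift (fun n => π (k (2*n+1))) u = 1 := by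
      have hm : FreeGroup.lift (fun n => k (2*n+1)) u ∈ V := hK G _
      have : π (FreeGroup.lift (fun n => k (2*n+1)) u) =
          FreeGroup.lift (fun n => π (k (2*n+1))) u :=
        DFunLike.congr_fun (hom_lift π (fun n => k (2*n+1))) u
      rw [← this, hπ, QuotientGroup.mk'_apply]
      exact (QuotientGroup.eq_one_iff _).mpr hm
    have expand : FreeGroup.lift (fun n => π (k n)) w' =
        FreeGroup.lift (fun n => π (k (2*n))) w *
          (FreeGroup.lift (fun n => π (k (2*n+1))) u)⁻¹ := by
      rw [hw', map_mul, map_inv, lift_map', lift_map']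
    rw [← hh, ← hk, step, expand, huval]
    simp
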